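/- Let W, H > 0, K ∈ ℕ, real coefficients a_{up} (0 ≤ u, p ≤ K) with a_{00} = 0, and ψ(z,v) = Σ_{u=0}^{K} Σ_{p=0}^{K} a_{up} cos(uπz/W) cos(pπv/H). Fix y_i ∈ ℝ, w_i > 0, A_i > 0 and h_i = A_i/w_i, and define g(x) = ∬_{[x − w_i/2, x + w_i/2] × [y_i − h_i/2, y_i + h_i/2]} ψ(z,v) dz dv. Then g is differentiable in x with derivative g′(x_i) = Σ_{u=1}^{K} Σ_{p=1}^{K} a_{up} (H/(pπ)) [cos(uπ(x_i + w_i/2)/W) − cos(uπ(x_i − w_i/2)/W)] [sin(pπ(y_i + h_i/2)/H) − sin(pπ(y_i − h_i/2)/H)] + Σ_{u=1}^{K} a_{u0} h_i [cos(uπ(x_i + w_i/2)/W) − cos(uπ(x_i − w_i/2)/W)]. -/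

import Mathlib

open MeasureTheory Real

lemma integral_cos_mul' (c : ℝ) (hc : c ≠ 0) (A B : ℝ) :
    ∫ v in A..B, Real.cos (c * v) = (Real.sin (c * B) - Real.sin (c * A)) / c := by
  have h : ∀ v ∈ Set.uIcc A B, HasDerivAt (fun v => Real.sin (c * v) / c) (Real.cos (c * v)) v := by
    intro v _
    have h1 : HasDerivAt (fun v : ℝ => c * v) c v := by
      simpa using (hasDerivAt_id v).const_mul c
    have h2 := (h1.sin).div_const c
    simpa [mul_div_assoc, div_self hc] using h2
  have hint : IntervalIntegrable (fun v => Real.cos (c * v)) volume A B :=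
    (Real.continuous_cos.comp (continuous_const.mul continuous_id)).intervalIntegrable A B
  rw [intervalIntegral.integral_eq_sub_of_hasDerivAt h hint]
  ring

set_option maxHeartbeats 800000 in
theorem hasDerivAt_potential_energy_x
    (W H : ℝ) (hW : 0 < W) (hH : 0 < H) (K : ℕ) (a : ℕ → ℕ → ℝ) (ha00 : a 0 0 = 0)
    (yi wi Ai : ℝ) (hwi : 0 < wi) (hAi : 0 < Ai) (xi : ℝ) :
    HasDerivAt
      (fun x : ℝ =>
        ∫ z in (x - wi / 2)..(x + wi / 2), ∫ v in (yi - (Ai / wi) / 2)..(yi + (Ai / wi) / 2),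
          ∑ u ∈ Finset.range (K + 1), ∑ p ∈ Finset.range (K + 1),
            a u p * Real.cos ((u : ℝ) * π * z / W) * Real.cos ((p : ℝ) * π * v / H))
      ((∑ u ∈ Finset.Icc 1 K, ∑ p ∈ Finset.Icc 1 K,
          a u p * (H / ((p : ℝ) * π)) *
            (Real.cos ((u : ℝ) * π * (xi + wi / 2) / W) -
              Real.cos ((u : ℝ) * π * (xi - wi / 2) / W)) *
            (Real.sin ((p : ℝ) * π * (yi + (Ai / wi) / 2) / H) -
              Real.sin ((p : ℝ) * π * (yi - (Ai / wi) / 2) / H)))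
        + (∑ u ∈ Finset.Icc 1 K,
            a u 0 * (Ai / wi) *
              (Real.cos ((u : ℝ) * π * (xi + wi / 2) / W) -
                Real.cos ((u : ℝ) * π * (xi - wi / 2) / W))))
      xi := by
  have hπ : (0:ℝ) < π := Real.pi_pos
  set hi : ℝ := Ai / wi with hhi
  set C : ℕ → ℝ := fun p => ∫ v in (yi - hi/2)..(yi + hi/2), Real.cos ((p:ℝ) * π * v / H)
    with hCdef
  set F : ℝ → ℝ := fun z => ∑ u ∈ Finset.range (K+1), ∑ p ∈ Finset.range (K+1),
      a u p * Real.cos ((u:ℝ) * π * z / W) * C p with hFdef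
  -- inner integral computation
  have hcontv : ∀ (c : ℝ) (p : ℕ), Continuous (fun v : ℝ => c * Real.cos ((p:ℝ) * π * v / H)) :=
    fun c p => continuous_const.mul (Real.continuous_cos.comp
      ((continuous_const.mul continuous_id).div_const H))
  have hinner : ∀ z : ℝ, (∫ v in (yi - hi/2)..(yi + hi/2),
      ∑ u ∈ Finset.range (K+1), ∑ p ∈ Finset.range (K+1),
        a u p * Real.cos ((u:ℝ) * π * z / W) * Real.cos ((p:ℝ) * π * v / H)) = F z := by
    intro z
    rw [hFdef]
    have h1 : (∫ v in (yi - hi/2)..(yi + hi/2),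
        ∑ u ∈ Finset.range (K+1), ∑ p ∈ Finset.range (K+1),
          a u p * Real.cos ((u:ℝ) * π * z / W) * Real.cos ((p:ℝ) * π * v / H))
        = ∑ u ∈ Finset.range (K+1), ∫ v in (yi - hi/2)..(yi + hi/2),
            ∑ p ∈ Finset.range (K+1),
              a u p * Real.cos ((u:ℝ) * π * z / W) * Real.cos ((p:ℝ) * π * v / H) :=
      intervalIntegral.integral_finset_sum (μ := volume)
        (f := fun u v => ∑ p ∈ Finset.range (K+1),
          a u p * Real.cos ((u:ℝ) * π * z / W) * Real.cos ((p:ℝ) * π * v / H))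
        (fun u _ => (continuous_finset_sum _ fun p _ => hcontv _ p).intervalIntegrable _ _)
    rw [h1]
    refine Finset.sum_congr rfl fun u _ => ?_
    have h2 : (∫ v in (yi - hi/2)..(yi + hi/2),
        ∑ p ∈ Finset.range (K+1),
          a u p * Real.cos ((u:ℝ) * π * z / W) * Real.cos ((p:ℝ) * π * v / H))
        = ∑ p ∈ Finset.range (K+1), ∫ v in (yi - hi/2)..(yi + hi/2),
            a u p * Real.cos ((u:ℝ) * π * z / W) * Real.cos ((p:ℝ) * π * v / H) :=
      intervalIntegral.integral_finset_sum (μ := volume)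
        (f := fun p v => a u p * Real.cos ((u:ℝ) * π * z / W) * Real.cos ((p:ℝ) * π * v / H))
        (fun p _ => (hcontv _ p).intervalIntegrable _ _)
    rw [h2]
    refine Finset.sum_congr rfl fun p _ => ?_
    exact intervalIntegral.integral_const_mul _ _
  -- continuity of F
  have hFcont : Continuous F := by
    rw [hFdef]
    exact continuous_finset_sum _ fun u _ => continuous_finset_sum _ fun p _ =>
      (continuous_const.mul (Real.continuous_cos.comp
        ((continuous_const.mul continuous_id).div_const W))).mul continuous_const
  -- antiderivative
  set G : ℝ → ℝ := fun t => ∫ z in (0:ℝ)..t, F z with hGdef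
  have hG : ∀ t : ℝ, HasDerivAt G (F t) t := by
    intro t
    exact intervalIntegral.integral_hasDerivAt_right (hFcont.intervalIntegrable 0 t)
      (hFcont.stronglyMeasurable.stronglyMeasurableAtFilter) hFcont.continuousAt
  have key : ∀ x : ℝ, (∫ z in (x - wi/2)..(x + wi/2), F z) = G (x + wi/2) - G (x - wi/2) := by
    intro x
    have := intervalIntegral.integral_add_adjacent_intervals (μ := volume)
      (hFcont.intervalIntegrable 0 (x - wi/2)) (hFcont.intervalIntegrable (x - wi/2) (x + wi/2))
    rw [hGdef]
    simp only at this ⊢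
    linarith
  have hderiv : HasDerivAt (fun x : ℝ => G (x + wi/2) - G (x - wi/2))
      (F (xi + wi/2) - F (xi - wi/2)) xi := by
    have h1 := (hG (xi + wi/2)).comp xi ((hasDerivAt_id xi).add_const (wi/2))
    have h2 := (hG (xi - wi/2)).comp xi ((hasDerivAt_id xi).sub_const (wi/2))
    have h3 := h1.sub h2
    simp at h3
    exact h3
  -- values of C
  have hC0 : C 0 = hi := by
    simp [hCdef]
  have hCp : ∀ p : ℕ, p ∈ Finset.Icc 1 K →
      C p = (H / ((p:ℝ) * π)) *
        (Real.sin ((p:ℝ) * π * (yi + hi/2) / H) - Real.sin ((p:ℝ) * π * (yi - hi/2) / H)) := by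
    intro p hp
    have hp1 : (1:ℝ) ≤ (p:ℝ) := by
      have := (Finset.mem_Icc.mp hp).1
      exact_mod_cast this
    have hpπ : (p:ℝ) * π ≠ 0 := by positivity
    have hc : (p:ℝ) * π / H ≠ 0 := by positivity
    have he : ∀ v : ℝ, (p:ℝ) * π * v / H = ((p:ℝ) * π / H) * v := fun v => by ring
    rw [hCdef]
    simp only [he]
    rw [integral_cos_mul' _ hc]
    rw [show (p:ℝ) * π / H * (yi + hi/2) = (p:ℝ) * π * (yi + hi/2) / H by ring,
        show (p:ℝ) * π / H * (yi - hi/2) = (p:ℝ) * π * (yi - hi/2) / H by ring]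
    field_simp
  -- sum identity
  have hsplit : Finset.range (K+1) = insert 0 (Finset.Icc 1 K) := by
    ext n
    simp [Nat.lt_succ_iff, Nat.one_le_iff_ne_zero]
    omega
  have h0notin : (0:ℕ) ∉ Finset.Icc 1 K := by simp
  have hval : F (xi + wi/2) - F (xi - wi/2) =
      (∑ u ∈ Finset.Icc 1 K, ∑ p ∈ Finset.Icc 1 K,
          a u p * (H / ((p : ℝ) * π)) *
            (Real.cos ((u : ℝ) * π * (xi + wi / 2) / W) -
              Real.cos ((u : ℝ) * π * (xi - wi / 2) / W)) *
            (Real.sin ((p : ℝ) * π * (yi + hi / 2) / H) -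
              Real.sin ((p : ℝ) * π * (yi - hi / 2) / H)))
        + (∑ u ∈ Finset.Icc 1 K,
            a u 0 * hi *
              (Real.cos ((u : ℝ) * π * (xi + wi / 2) / W) -
                Real.cos ((u : ℝ) * π * (xi - wi / 2) / W))) := by
    rw [hFdef]
    simp only
    rw [← Finset.sum_sub_distrib]
    rw [hsplit, Finset.sum_insert h0notin]
    have hu0 : (∑ p ∈ insert 0 (Finset.Icc 1 K),
        a 0 p * Real.cos ((0:ℕ) * π * (xi + wi/2) / W) * C p)
        - (∑ p ∈ insert 0 (Finset.Icc 1 K),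
        a 0 p * Real.cos ((0:ℕ) * π * (xi - wi/2) / W) * C p) = 0 := by
      simp
    rw [hu0, zero_add]
    rw [← Finset.sum_add_distrib]
    refine Finset.sum_congr rfl fun u hu => ?_
    rw [← Finset.sum_sub_distrib, Finset.sum_insert h0notin]
    rw [hC0]
    have hrest : ∑ p ∈ Finset.Icc 1 K,
        (a u p * Real.cos ((u:ℝ) * π * (xi + wi/2) / W) * C p
          - a u p * Real.cos ((u:ℝ) * π * (xi - wi/2) / W) * C p)
        = ∑ p ∈ Finset.Icc 1 K, a u p * (H / ((p:ℝ) * π)) *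
            (Real.cos ((u:ℝ) * π * (xi + wi/2) / W) - Real.cos ((u:ℝ) * π * (xi - wi/2) / W)) *
            (Real.sin ((p:ℝ) * π * (yi + hi/2) / H) - Real.sin ((p:ℝ) * π * (yi - hi/2) / H)) :=
      Finset.sum_congr rfl fun p hp => by rw [hCp p hp]; ring
    rw [hrest]
    ring
  -- conclude
  have hfun : (fun x : ℝ =>
        ∫ z in (x - wi / 2)..(x + wi / 2), ∫ v in (yi - (Ai / wi) / 2)..(yi + (Ai / wi) / 2),
          ∑ u ∈ Finset.range (K + 1), ∑ p ∈ Finset.range (K + 1),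
            a u p * Real.cos ((u : ℝ) * π * z / W) * Real.cos ((p : ℝ) * π * v / H))
      = fun x : ℝ => G (x + wi/2) - G (x - wi/2) := by
    funext x
    rw [← key x]
    exact intervalIntegral.integral_congr fun z _ => hinner z
  rw [hfun]
  convert hderiv using 1
  rw [hval]
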